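/- Let D be a directed graph and σ an acyclic circuit signature of D. Let tree(D,σ) be the set of spanning trees T such that for every non-tree edge f, f lies in the positive arc of σ applied to the fundamental cycle C(T,f). Then for any two distinct trees T_1, T_2 ∈ tree(D,σ), the simplices Q̃_{T_1} and Q̃_{T_2} have disjoint interiors. -/

import Mathlib

open Finset Pointwise

noncomputable section

variable {V E ι : Type*}

/-- The vector `x_f ∈ ℝ^V` of an edge `f` with tail `t f` and head `h f`:
`+1` at the head, `-1` at the tail, `0` elsewhere (so `0` for a loop). -/
def xvec [DecidableEq V] (t h : E → V) (f : E) : V → ℝ :=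
  fun v => (if v = h f then 1 else 0) - (if v = t f then 1 else 0)

/-- The extended root polytope of the subgraph with edge set `S`:
`conv({0} ∪ {x_f : f ∈ S})`. -/
def rootPolyOn [DecidableEq V] (t h : E → V) (S : Set E) : Set (V → ℝ) :=
  convexHull ℝ ({0} ∪ (xvec t h '' S))

/-- The underlying (simple) undirected graph of the edges in `S`. -/
def underlyingOn (t h : E → V) (S : Set E) : SimpleGraph V :=
  SimpleGraph.fromRel (fun u v => ∃ f ∈ S, t f = u ∧ h f = v)

/-- A spanning tree: a set of edges whose underlying graph is connected and which
has `|V| - 1` edges. -/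
def IsSpanningTree [Fintype V] (t h : E → V) (T : Finset E) : Prop :=
  (underlyingOn t h ↑T).Connected ∧ T.card + 1 = Fintype.card V

/-- The number of lattice points of the `k`-th dilate of `Q`. -/
def latCount [Fintype ι] (Q : Set (ι → ℝ)) (k : ℕ) : ℕ :=
  Nat.card {p : ι → ℤ // (fun i => (p i : ℝ)) ∈ (k : ℝ) • Q}

/-- The Ehrhart series of `Q` as a formal power series. -/
def ehrSeries [Fintype ι] (Q : Set (ι → ℝ)) : PowerSeries ℤ :=
  PowerSeries.mk fun k => (latCount Q k : ℤ)

/-- The dimension of a polytope: the rank of its vector span. -/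
def pdim (Q : Set (ι → ℝ)) : ℕ := Module.finrank ℝ ↥(vectorSpan ℝ Q)

/-- `p` is the `h^*`-polynomial of `Q`: `(1-t)^{dim Q + 1} · Ehr_Q(t) = p(t)`. -/
def IsHStar [Fintype ι] (Q : Set (ι → ℝ)) (p : Polynomial ℤ) : Prop :=
  (1 - PowerSeries.X) ^ (pdim Q + 1) * ehrSeries Q = PowerSeries.mk fun i => p.coeff i

/-- The `±1` vector of a signed cycle with positive arc `Cp` and negative arc `Cm`. -/
def chiVec [DecidableEq E] (Cp Cm : Finset E) : E → ℝ :=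
  fun f => (if f ∈ Cp then 1 else 0) - (if f ∈ Cm then 1 else 0)

/-- A circulation: an assignment of reals to edges with zero net flow at each vertex. -/
def IsCirculation [Fintype E] [DecidableEq V] (t h : E → V) (φ : E → ℝ) : Prop :=
  ∑ f, φ f • xvec t h f = 0

/-- `(Cp, Cm)` is a signed cycle: the arcs are disjoint, the union is nonempty, the
`±1` vector is a circulation, and the support `Cp ∪ Cm` is minimal among supports of
nonzero circulations (i.e. it is a circuit of the graphic oriented matroid). -/
def IsSignedCycle [Fintype E] [DecidableEq E] [DecidableEq V] (t h : E → V)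
    (Cp Cm : Finset E) : Prop :=
  Disjoint Cp Cm ∧ (Cp ∪ Cm).Nonempty ∧ IsCirculation t h (chiVec Cp Cm) ∧
    ∀ φ : E → ℝ, IsCirculation t h φ → φ ≠ 0 →
      (∀ f, φ f ≠ 0 → f ∈ Cp ∪ Cm) → ∀ f ∈ Cp ∪ Cm, φ f ≠ 0

/-- A circuit signature: a choice, for each cycle, of exactly one of its two
orientations. -/
def IsCircuitSignature [Fintype E] [DecidableEq E] [DecidableEq V] (t h : E → V)
    (σ : Set (Finset E × Finset E)) : Prop :=
  (∀ q ∈ σ, IsSignedCycle t h q.1 q.2) ∧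
    ∀ Cp Cm : Finset E, IsSignedCycle t h Cp Cm → ((Cp, Cm) ∈ σ ↔ (Cm, Cp) ∉ σ)

/-- Acyclicity of a circuit signature: no nontrivial nonnegative combination of the
vectors of the chosen signed cycles vanishes. -/
def IsAcyclicSig [DecidableEq E] (σ : Set (Finset E × Finset E)) : Prop :=
  ∀ (s : Finset (Finset E × Finset E)) (a : Finset E × Finset E → ℝ),
    ↑s ⊆ σ → (∀ q, 0 ≤ a q) → (∃ q ∈ s, a q ≠ 0) →
      ∑ q ∈ s, a q • chiVec q.1 q.2 ≠ 0

/-- A weight function is generic if the two arcs of every cycle have different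
total weights. -/
def GenericWeight [Fintype E] [DecidableEq E] [DecidableEq V] (t h : E → V)
    (w : E → ℝ) : Prop :=
  ∀ Cp Cm : Finset E, IsSignedCycle t h Cp Cm → ∑ f ∈ Cp, w f ≠ ∑ f ∈ Cm, w f

/-- The circuit signature `cir^w`: orient each cycle so that the positive arc has
the larger total `w`-weight. -/
def cirw [Fintype E] [DecidableEq E] [DecidableEq V] (t h : E → V) (w : E → ℝ) :
    Set (Finset E × Finset E) :=
  {q | IsSignedCycle t h q.1 q.2 ∧ ∑ f ∈ q.2, w f < ∑ f ∈ q.1, w f}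

/-- `tree(D,σ)`: spanning trees `T` such that every non-tree edge `f` lies in the
positive arc of the (σ-oriented) fundamental cycle of `f`, i.e. of the unique cycle
contained in `T ∪ {f}`. -/
def treeSet [Fintype V] [Fintype E] [DecidableEq V] [DecidableEq E] (t h : E → V)
    (σ : Set (Finset E × Finset E)) : Set (Finset E) :=
  {T | IsSpanningTree t h T ∧
    ∀ f ∉ T, ∀ Cp Cm : Finset E, (Cp, Cm) ∈ σ → Cp ∪ Cm ⊆ insert f T → f ∈ Cp}

/-- `F` is a face of `Q`: the locus where some linear functional bounded above on `Q`
attains its maximum. -/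
def IsFaceOf (Q F : Set (ι → ℝ)) : Prop :=
  ∃ (l : (ι → ℝ) →ₗ[ℝ] ℝ) (c : ℝ), (∀ y ∈ Q, l y ≤ c) ∧ F = {y ∈ Q | l y = c}

/-- `F` is a facet of `Q`: a face of codimension one. -/
def IsFacetOf (Q F : Set (ι → ℝ)) : Prop :=
  IsFaceOf Q F ∧ pdim F + 1 = pdim Q

end

set_option linter.unusedSectionVars false
section proofs

open Finset

variable {V E : Type*} [Fintype V] [Fintype E] [DecidableEq V] [DecidableEq E]
variable {t h : E → V}

private lemma circ_apply {φ : E → ℝ} (hφ : IsCirculation t h φ) (v : V) :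
    ∑ f, φ f * ((if v = h f then (1:ℝ) else 0) - (if v = t f then 1 else 0)) = 0 := by
  have h0 := congrFun hφ v
  simpa [xvec, Finset.sum_apply] using h0

private lemma swap_cycle {Cp Cm : Finset E} (hc : IsSignedCycle t h Cp Cm) :
    IsSignedCycle t h Cm Cp := by
  obtain ⟨hd, hne, hcirc, hmin⟩ := hc
  refine ⟨hd.symm, by rwa [Finset.union_comm], ?_, ?_⟩
  · have hneg : chiVec Cm Cp = -chiVec Cp Cm := by
      funext f; simp only [chiVec, Pi.neg_apply]; ring
    unfold IsCirculation at hcirc ⊢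
    rw [hneg]
    have : ∑ f, (-chiVec Cp Cm) f • xvec t h f = -∑ f, chiVec Cp Cm f • xvec t h f := by
      rw [← Finset.sum_neg_distrib]
      exact Finset.sum_congr rfl fun f _ => by rw [Pi.neg_apply, neg_smul]
    rw [this, hcirc, neg_zero]
  · intro φ hφ hφne hsupp f hf
    exact hmin φ hφ hφne (fun g hg => by rw [Finset.union_comm]; exact hsupp g hg)
      f (by rwa [Finset.union_comm])

private lemma loop_cycle {f : E} (hl : t f = h f) : IsSignedCycle t h {f} ∅ := by
  refine ⟨Finset.disjoint_empty_right _, by simp, ?_, ?_⟩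
  · unfold IsCirculation
    have hx : xvec t h f = 0 := by funext v; simp [xvec, hl]
    rw [Finset.sum_eq_single f (fun g _ hg => by simp [chiVec, hg]) (by simp)]
    simp [chiVec, hx]
  · intro ψ hψ hψne hsupp g hg
    simp only [Finset.union_empty, Finset.mem_singleton] at hg
    subst hg
    intro h0
    apply hψne
    funext g'
    by_cases hgf : g' = g
    · rwa [hgf]
    · by_contra hne2
      have := hsupp g' hne2
      simp [hgf] at this

private lemma walk_out {φ : E → ℝ} (hφ : IsCirculation t h φ)
    (hnl : ∀ f, φ f ≠ 0 → t f ≠ h f) {f : E} {v : V}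
    (hin : (0 < φ f ∧ h f = v) ∨ (φ f < 0 ∧ t f = v)) :
    ∃ g, g ≠ f ∧ ((0 < φ g ∧ t g = v) ∨ (φ g < 0 ∧ h g = v)) := by
  classical
  set F : E → ℝ := fun g =>
    φ g * ((if v = h g then (1:ℝ) else 0) - (if v = t g then 1 else 0)) with hF
  have hsum : ∑ g, F g = 0 := circ_apply hφ v
  have hfpos : 0 < F f := by
    rcases hin with ⟨h1, h2⟩ | ⟨h1, h2⟩
    · have hvh : v = h f := h2.symm
      have hvt : v ≠ t f := fun hv => hnl f (ne_of_gt h1) ((hv.symm.trans hvh))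
      simp only [hF, if_pos hvh, if_neg hvt]
      nlinarith
    · have hvt : v = t f := h2.symm
      have hvh : v ≠ h f := fun hv => hnl f (ne_of_lt h1) (hvt.symm.trans hv)
      simp only [hF, if_neg hvh, if_pos hvt]
      nlinarith
  by_contra hcon
  push_neg at hcon
  have hnonneg : ∀ g ∈ Finset.univ, 0 ≤ F g := by
    intro g _
    by_cases hgf : g = f
    · subst hgf; exact le_of_lt hfpos
    · by_cases hh : v = h g <;> by_cases ht : v = t g
      · simp only [hF, if_pos hh, if_pos ht]; norm_num
      · have hng : ¬ (φ g < 0) := fun hlt => (hcon g hgf).2 hlt hh.symm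
        simp only [hF, if_pos hh, if_neg ht]
        nlinarith [not_lt.mp hng]
      · have hng : ¬ (0 < φ g) := fun hlt => (hcon g hgf).1 hlt ht.symm
        simp only [hF, if_neg hh, if_pos ht]
        nlinarith [not_lt.mp hng]
      · simp only [hF, if_neg hh, if_neg ht]; norm_num
  have hpos : 0 < ∑ g, F g := Finset.sum_pos' hnonneg ⟨f, Finset.mem_univ f, hfpos⟩
  linarith

private lemma exists_conformal_cycle {φ : E → ℝ} (hφ : IsCirculation t h φ) (hne : φ ≠ 0) :
    ∃ Cp Cm : Finset E, IsSignedCycle t h Cp Cm ∧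
      (∀ f ∈ Cp, 0 < φ f) ∧ (∀ f ∈ Cm, φ f < 0) := by
  classical
  obtain ⟨f₀, hf₀⟩ : ∃ f, φ f ≠ 0 := by
    by_contra hc; push_neg at hc; exact hne (funext fun f => hc f)
  by_cases hloop : ∃ f, φ f ≠ 0 ∧ t f = h f
  · obtain ⟨f, hf, hl⟩ := hloop
    rcases lt_or_gt_of_ne hf with hlt | hgt
    · exact ⟨∅, {f}, swap_cycle (loop_cycle hl), by simp, by simpa using hlt⟩
    · exact ⟨{f}, ∅, loop_cycle hl, by simpa using hgt, by simp⟩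
  · push_neg at hloop
    have hnl : ∀ f, φ f ≠ 0 → t f ≠ h f := hloop
    have hstep : ∀ p : E × V, ∃ g,
        ((0 < φ p.1 ∧ h p.1 = p.2) ∨ (φ p.1 < 0 ∧ t p.1 = p.2)) →
        (g ≠ p.1 ∧ ((0 < φ g ∧ t g = p.2) ∨ (φ g < 0 ∧ h g = p.2))) := by
      intro p
      by_cases hin : (0 < φ p.1 ∧ h p.1 = p.2) ∨ (φ p.1 < 0 ∧ t p.1 = p.2)
      · obtain ⟨g, hg⟩ := walk_out hφ hnl hin
        exact ⟨g, fun _ => hg⟩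
      · exact ⟨p.1, fun hc => absurd hc hin⟩
    choose nxt hnxt using hstep
    set nextp : E × V → E × V :=
      fun p => (nxt p, if 0 < φ (nxt p) then h (nxt p) else t (nxt p)) with hnextp
    set P : ℕ → E × V := fun n => nextp^[n] (f₀, if 0 < φ f₀ then h f₀ else t f₀) with hP
    have hP0 : P 0 = (f₀, if 0 < φ f₀ then h f₀ else t f₀) := rfl
    have hPsucc : ∀ n, P (n+1) = nextp (P n) := by
      intro n
      rw [hP]
      exact Function.iterate_succ_apply' nextp n _
    have hInv : ∀ n, (0 < φ (P n).1 ∧ h (P n).1 = (P n).2) ∨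
        (φ (P n).1 < 0 ∧ t (P n).1 = (P n).2) := by
      intro n
      induction n with
      | zero =>
        rw [hP0]
        rcases lt_or_gt_of_ne hf₀ with hlt | hgt
        · right; exact ⟨hlt, by simp [if_neg (not_lt.mpr (le_of_lt hlt))]⟩
        · left; exact ⟨hgt, by simp [if_pos hgt]⟩
      | succ n ih =>
        have hg := hnxt (P n) ih
        rw [hPsucc n, hnextp]
        by_cases hs : 0 < φ (nxt (P n))
        · left; exact ⟨hs, by simp [if_pos hs]⟩
        · right
          have hlt : φ (nxt (P n)) < 0 := by
            rcases hg.2 with ⟨h1, _⟩ | ⟨h1, _⟩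
            · exact absurd h1 hs
            · exact h1
          exact ⟨hlt, by simp [if_neg hs]⟩
    have hEdge : ∀ n, (0 < φ (P (n+1)).1 ∧ t (P (n+1)).1 = (P n).2 ∧ h (P (n+1)).1 = (P (n+1)).2)
        ∨ (φ (P (n+1)).1 < 0 ∧ h (P (n+1)).1 = (P n).2 ∧ t (P (n+1)).1 = (P (n+1)).2) := by
      intro n
      have hg := hnxt (P n) (hInv n)
      have h1 : (P (n+1)).1 = nxt (P n) := by rw [hPsucc n]
      by_cases hs : 0 < φ (nxt (P n))
      · left
        refine ⟨by rw [h1]; exact hs, ?_, ?_⟩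
        · rw [h1]
          rcases hg.2 with ⟨_, h2⟩ | ⟨hneg, _⟩
          · exact h2
          · linarith
        · rw [h1, hPsucc n, hnextp]; simp [if_pos hs]
      · right
        have hlt : φ (nxt (P n)) < 0 := by
          rcases hg.2 with ⟨h2, _⟩ | ⟨h2, _⟩
          · exact absurd h2 hs
          · exact h2
        refine ⟨by rw [h1]; exact hlt, ?_, ?_⟩
        · rw [h1]
          rcases hg.2 with ⟨h2, _⟩ | ⟨_, h2⟩
          · exact absurd h2 hs
          · exact h2
        · rw [h1, hPsucc n, hnextp]; simp [if_neg hs]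
    set u : ℕ → V := fun n => (P n).2 with hu
    obtain ⟨a, b, hab, hu_eq⟩ := Finite.exists_ne_map_eq_of_infinite u
    have hQ : ∃ j, ∃ i, i < j ∧ u i = u j := by
      rcases lt_or_gt_of_ne hab with hlt | hgt
      · exact ⟨b, a, hlt, hu_eq⟩
      · exact ⟨a, b, hgt, hu_eq.symm⟩
    set j := Nat.find hQ with hj
    obtain ⟨i, hij, huij⟩ := Nat.find_spec hQ
    have hmin : ∀ a b, a < b → b < j → u a ≠ u b := by
      intro a b h1 h2 he
      exact Nat.find_min hQ h2 ⟨a, h1, he⟩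
    set k := j - i with hk
    have hkpos : 0 < k := Nat.sub_pos_of_lt hij
    set U : ℕ → V := fun m => u (i + m) with hU
    have hUk : U k = U 0 := by
      rw [hU]; simp only
      rw [hk, Nat.add_sub_cancel' (le_of_lt hij), Nat.add_zero]
      exact huij.symm
    have hUinj : ∀ a b, a < k → b < k → U a = U b → a = b := by
      intro a b ha hb he
      by_contra hne2
      rcases Nat.lt_or_ge a b with hlt | hge
      · exact hmin (i+a) (i+b) (by omega) (by omega) he
      · have hba : b < a := by omega
        exact hmin (i+b) (i+a) (by omega) (by omega) he.symm
    set d : ℕ → E := fun r => (P (i + r + 1)).1 with hd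
    have hF1 : ∀ r, (0 < φ (d r) ∧ t (d r) = U r ∧ h (d r) = U (r+1))
        ∨ (φ (d r) < 0 ∧ h (d r) = U r ∧ t (d r) = U (r+1)) := by
      intro r
      exact hEdge (i + r)
    have hFnz : ∀ r, φ (d r) ≠ 0 := by
      intro r
      rcases hF1 r with ⟨h1,_,_⟩ | ⟨h1,_,_⟩
      · exact ne_of_gt h1
      · exact ne_of_lt h1
    have hdinj : ∀ a b, a < k → b < k → d a = d b → a = b := by
      intro a b ha hb he
      rcases hF1 a with ⟨h1, h2, _⟩ | ⟨h1, h2, _⟩ <;>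
        rcases hF1 b with ⟨h1', h2', _⟩ | ⟨h1', h2', _⟩
      · exact hUinj a b ha hb (by rw [← h2, ← h2', he])
      · rw [he] at h1; linarith
      · rw [he] at h1; linarith
      · exact hUinj a b ha hb (by rw [← h2, ← h2', he])
    have hvert : ∀ r m, r < k → m < k → 0 < m → m ≠ r → m ≠ r + 1 →
        U m ≠ U r ∧ U m ≠ U (r+1) := by
      intro r m hr hm hm0 hne1 hne2
      constructor
      · intro he; exact hne1 (hUinj m r hm hr he)
      · intro he
        rcases Nat.lt_or_ge (r+1) k with hlt | hge
        · exact hne2 (hUinj m (r+1) hm hlt he)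
        · have hrk : r + 1 = k := by omega
          rw [hrk, hUk] at he
          have := hUinj m 0 hm hkpos he
          omega
    set Cp : Finset E := ((Finset.range k).filter fun r => 0 < φ (d r)).image d with hCp
    set Cm : Finset E := ((Finset.range k).filter fun r => φ (d r) < 0).image d with hCm
    have hmemCp : ∀ e, e ∈ Cp ↔ ∃ r, r < k ∧ d r = e ∧ 0 < φ e := by
      intro e
      rw [hCp, Finset.mem_image]
      constructor
      · rintro ⟨r, hr, rfl⟩
        rw [Finset.mem_filter, Finset.mem_range] at hr
        exact ⟨r, hr.1, rfl, hr.2⟩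
      · rintro ⟨r, hr, rfl, hp⟩
        exact ⟨r, Finset.mem_filter.mpr ⟨Finset.mem_range.mpr hr, hp⟩, rfl⟩
    have hmemCm : ∀ e, e ∈ Cm ↔ ∃ r, r < k ∧ d r = e ∧ φ e < 0 := by
      intro e
      rw [hCm, Finset.mem_image]
      constructor
      · rintro ⟨r, hr, rfl⟩
        rw [Finset.mem_filter, Finset.mem_range] at hr
        exact ⟨r, hr.1, rfl, hr.2⟩
      · rintro ⟨r, hr, rfl, hp⟩
        exact ⟨r, Finset.mem_filter.mpr ⟨Finset.mem_range.mpr hr, hp⟩, rfl⟩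
    have hCpφ : ∀ e ∈ Cp, 0 < φ e := fun e he => ((hmemCp e).mp he).choose_spec.2.2
    have hCmφ : ∀ e ∈ Cm, φ e < 0 := fun e he => ((hmemCm e).mp he).choose_spec.2.2
    have hdisj : Disjoint Cp Cm := Finset.disjoint_left.mpr
      (fun e he1 he2 => absurd (hCpφ e he1) (not_lt.mpr (le_of_lt (hCmφ e he2))))
    have hunion_mem : ∀ e, e ∈ Cp ∪ Cm ↔ ∃ r, r < k ∧ d r = e := by
      intro e
      rw [Finset.mem_union, hmemCp, hmemCm]
      constructor
      · rintro (⟨r, hr, he, _⟩ | ⟨r, hr, he, _⟩) <;> exact ⟨r, hr, he⟩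
      · rintro ⟨r, hr, rfl⟩
        rcases (hFnz r).lt_or_gt with hlt | hgt
        · right; exact ⟨r, hr, rfl, hlt⟩
        · left; exact ⟨r, hr, rfl, hgt⟩
    have hne' : (Cp ∪ Cm).Nonempty := ⟨d 0, (hunion_mem (d 0)).mpr ⟨0, hkpos, rfl⟩⟩
    have hchi : ∀ r, r < k → chiVec Cp Cm (d r) = if 0 < φ (d r) then 1 else -1 := by
      intro r hr
      by_cases hs : 0 < φ (d r)
      · have h1 : d r ∈ Cp := (hmemCp _).mpr ⟨r, hr, rfl, hs⟩
        have h2 : d r ∉ Cm := fun hc => absurd hs (not_lt.mpr (le_of_lt (hCmφ _ hc)))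
        simp [chiVec, h1, h2, hs]
      · have hlt : φ (d r) < 0 := (hFnz r).lt_or_gt.resolve_right hs
        have h1 : d r ∈ Cm := (hmemCm _).mpr ⟨r, hr, rfl, hlt⟩
        have h2 : d r ∉ Cp := fun hc => absurd (hCpφ _ hc) hs
        simp [chiVec, h1, h2, hs]
    have hcircchi : IsCirculation t h (chiVec Cp Cm) := by
      unfold IsCirculation
      funext v
      rw [Finset.sum_apply]
      have himg : Cp ∪ Cm = (Finset.range k).image d := by
        ext e
        rw [hunion_mem, Finset.mem_image]
        constructor
        · rintro ⟨r, hr, he⟩; exact ⟨r, Finset.mem_range.mpr hr, he⟩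
        · rintro ⟨r, hr, he⟩; exact ⟨r, Finset.mem_range.mp hr, he⟩
      have hzero : ∀ e ∈ Finset.univ, e ∉ Cp ∪ Cm →
          (chiVec Cp Cm e • xvec t h e) v = 0 := by
        intro e _ he
        rw [Finset.mem_union] at he; push_neg at he
        simp [chiVec, he.1, he.2]
      rw [← Finset.sum_subset (Finset.subset_univ (Cp ∪ Cm)) hzero]
      rw [himg, Finset.sum_image (fun x hx y hy he =>
        hdinj x y (Finset.mem_range.mp hx) (Finset.mem_range.mp hy) he)]
      have hterm : ∀ r ∈ Finset.range k, (chiVec Cp Cm (d r) • xvec t h (d r)) v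
          = (if v = U (r+1) then (1:ℝ) else 0) - (if v = U r then 1 else 0) := by
        intro r hr
        rw [Finset.mem_range] at hr
        rw [Pi.smul_apply, smul_eq_mul, hchi r hr]
        rcases hF1 r with ⟨h1, h2, h3⟩ | ⟨h1, h2, h3⟩
        · rw [if_pos h1]
          simp [xvec, h2, h3]
        · rw [if_neg (not_lt.mpr (le_of_lt h1))]
          simp only [xvec, h2, h3]
          ring
      rw [Finset.sum_congr rfl hterm,
        Finset.sum_range_sub (fun m => if v = U m then (1:ℝ) else 0)]
      rw [hUk]
      simp
    refine ⟨Cp, Cm, ⟨hdisj, hne', hcircchi, ?_⟩, hCpφ, hCmφ⟩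
    intro ψ hψ hψne hsupp e he
    obtain ⟨r₀, hr₀, rfl⟩ := (hunion_mem e).mp he
    set c : ℕ → ℝ := fun r => (if 0 < φ (d r) then 1 else -1) * ψ (d r) with hc
    have hstep2 : ∀ r, r + 1 < k → c (r+1) = c r := by
      intro r hrk
      have hrk' : r < k := by omega
      have hsum := circ_apply hψ (U (r+1))
      have hzero : ∀ e ∈ Finset.univ, e ∉ (Finset.range k).image d →
          ψ e * ((if U (r+1) = h e then (1:ℝ) else 0) - (if U (r+1) = t e then 1 else 0)) = 0 := by
        intro e _ he
        have hψe : ψ e = 0 := by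
          by_contra hc2
          apply he
          obtain ⟨r', hr', he'⟩ := (hunion_mem e).mp (hsupp e hc2)
          exact Finset.mem_image.mpr ⟨r', Finset.mem_range.mpr hr', he'⟩
        rw [hψe, zero_mul]
      rw [← Finset.sum_subset (Finset.subset_univ ((Finset.range k).image d)) hzero] at hsum
      rw [Finset.sum_image (fun x hx y hy he =>
        hdinj x y (Finset.mem_range.mp hx) (Finset.mem_range.mp hy) he)] at hsum
      have hval : ∀ r' ∈ Finset.range k,
          ψ (d r') * ((if U (r+1) = h (d r') then (1:ℝ) else 0) - (if U (r+1) = t (d r') then 1 else 0))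
          = (if r' = r then c r else 0) + (if r' = r + 1 then -(c (r+1)) else 0) := by
        intro r' hr'
        rw [Finset.mem_range] at hr'
        by_cases he1 : r' = r
        · rw [he1]
          rw [if_pos rfl, if_neg (show ¬ (r = r + 1) by omega)]
          have hne3 : U (r+1) ≠ U r := fun hee => by
            have := hUinj (r+1) r hrk hrk' hee; omega
          rcases hF1 r with ⟨h1, h2, h3⟩ | ⟨h1, h2, h3⟩
          · rw [if_pos h3.symm,
              if_neg (show U (r+1) ≠ t (d r) from fun hee => hne3 (hee.trans h2))]
            simp only [hc]
            rw [if_pos h1]; ring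
          · rw [if_neg (show U (r+1) ≠ h (d r) from fun hee => hne3 (hee.trans h2)),
              if_pos h3.symm]
            simp only [hc]
            rw [if_neg (not_lt.mpr (le_of_lt h1))]; ring
        · by_cases he2 : r' = r + 1
          · rw [he2]
            rw [if_neg (show ¬ (r + 1 = r) by omega), if_pos rfl]
            have hne3 : U (r+1) ≠ U (r+2) := by
              intro hee
              rcases Nat.lt_or_ge (r+2) k with hlt | hge
              · have := hUinj (r+1) (r+2) hrk hlt hee; omega
              · have hrk2 : r + 2 = k := by omega
                rw [hrk2, hUk] at hee
                have := hUinj (r+1) 0 hrk hkpos hee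
                omega
            rcases hF1 (r+1) with ⟨h1, h2, h3⟩ | ⟨h1, h2, h3⟩
            · rw [if_neg (show U (r+1) ≠ h (d (r+1)) from fun hee => hne3 (hee.trans h3)),
                if_pos h2.symm]
              simp only [hc]
              rw [if_pos h1]; ring
            · rw [if_pos h2.symm,
                if_neg (show U (r+1) ≠ t (d (r+1)) from fun hee => hne3 (hee.trans h3))]
              simp only [hc]
              rw [if_neg (not_lt.mpr (le_of_lt h1))]; ring
          · have hv := hvert r' (r+1) hr' hrk (Nat.succ_pos r)
              (fun hh => he2 hh.symm) (fun hh => he1 (by omega))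
            rcases hF1 r' with ⟨_, h2, h3⟩ | ⟨_, h2, h3⟩
            · rw [if_neg (show U (r+1) ≠ h (d r') from fun hee => hv.2 (hee.trans h3)),
                if_neg (show U (r+1) ≠ t (d r') from fun hee => hv.1 (hee.trans h2)),
                if_neg he1, if_neg he2]
              ring
            · rw [if_neg (show U (r+1) ≠ h (d r') from fun hee => hv.1 (hee.trans h2)),
                if_neg (show U (r+1) ≠ t (d r') from fun hee => hv.2 (hee.trans h3)),
                if_neg he1, if_neg he2]
              ring
      rw [Finset.sum_congr rfl hval, Finset.sum_add_distrib] at hsum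
      rw [Finset.sum_ite_eq' (Finset.range k) r (fun _ => c r)] at hsum
      rw [Finset.sum_ite_eq' (Finset.range k) (r+1) (fun _ => -(c (r+1)))] at hsum
      rw [if_pos (Finset.mem_range.mpr hrk'), if_pos (Finset.mem_range.mpr hrk)] at hsum
      linarith
    have hconst : ∀ r, r < k → c r = c 0 := by
      intro r
      induction r with
      | zero => intro _; rfl
      | succ n ih =>
        intro hnk
        rw [hstep2 n hnk]
        exact ih (by omega)
    obtain ⟨e₁, he₁⟩ : ∃ e, ψ e ≠ 0 := by
      by_contra hcc; push_neg at hcc; exact hψne (funext hcc)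
    obtain ⟨r₁, hr₁, hre⟩ := (hunion_mem e₁).mp (hsupp e₁ he₁)
    have hc₁ : c r₁ ≠ 0 := by
      rw [hc]; simp only
      rw [hre]
      exact mul_ne_zero (by split_ifs <;> norm_num) he₁
    have hc0 : c 0 ≠ 0 := by rw [← hconst r₁ hr₁]; exact hc₁
    have hcr₀ : c r₀ ≠ 0 := by rw [hconst r₀ hr₀]; exact hc0
    intro h0
    apply hcr₀
    rw [hc]; simp only [h0, mul_zero]

private lemma span_delta_sub {T : Finset E} (hT : IsSpanningTree t h T) (u v : V) :
    (fun w => (if w = u then (1:ℝ) else 0) - if w = v then 1 else 0) ∈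
      Submodule.span ℝ (xvec t h '' ↑T) := by
  have hreach := hT.1.preconnected u v
  obtain ⟨wk⟩ := hreach
  induction wk with
  | nil =>
    have hzero : ∀ x : V, (fun w => (if w = x then (1:ℝ) else 0) - if w = x then 1 else 0) = 0 := by
      intro x; funext w; simp
    rw [hzero]
    exact Submodule.zero_mem _
  | @cons a b c hadj p ih =>
    have hab : (fun w => (if w = a then (1:ℝ) else 0) - if w = b then 1 else 0) ∈
        Submodule.span ℝ (xvec t h '' ↑T) := by
      rw [underlyingOn, SimpleGraph.fromRel_adj] at hadj
      obtain ⟨hne2, hrel | hrel⟩ := hadj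
      · obtain ⟨f, hf, hft, hfh⟩ := hrel
        have hx : xvec t h f = fun w => (if w = b then (1:ℝ) else 0) - if w = a then 1 else 0 := by
          funext w; rw [xvec, hft, hfh]
        have hmem : xvec t h f ∈ Submodule.span ℝ (xvec t h '' ↑T) :=
          Submodule.subset_span ⟨f, hf, rfl⟩
        have hneg := Submodule.neg_mem _ hmem
        rw [hx] at hneg
        have heq : (fun w => (if w = a then (1:ℝ) else 0) - if w = b then 1 else 0) =
            -(fun w => (if w = b then (1:ℝ) else 0) - if w = a then 1 else 0) := by
          funext w; rw [Pi.neg_apply, neg_sub]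
        rw [heq]
        exact hneg
      · obtain ⟨f, hf, hft, hfh⟩ := hrel
        have hx : xvec t h f = fun w => (if w = a then (1:ℝ) else 0) - if w = b then 1 else 0 := by
          funext w; rw [xvec, hft, hfh]
        exact hx ▸ Submodule.subset_span ⟨f, hf, rfl⟩
    have hsum := Submodule.add_mem _ hab ih
    have heq : (fun w => (if w = a then (1:ℝ) else 0) - if w = c then 1 else 0) =
        (fun w => (if w = a then (1:ℝ) else 0) - if w = b then 1 else 0) +
        (fun w => (if w = b then (1:ℝ) else 0) - if w = c then 1 else 0) := by
      funext w; rw [Pi.add_apply]; ring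
    rw [heq]
    exact hsum

private lemma xvec_mem_span {T : Finset E} (hT : IsSpanningTree t h T) (f : E) :
    xvec t h f ∈ Submodule.span ℝ (xvec t h '' ↑T) :=
  span_delta_sub hT (h f) (t f)

private lemma tree_indep {T : Finset E} (hT : IsSpanningTree t h T) :
    LinearIndependent ℝ (fun f : {x // x ∈ T} => xvec t h (f : E)) := by
  classical
  have hrange : Set.range (fun f : {x // x ∈ T} => xvec t h (f : E)) = xvec t h '' ↑T := by
    ext y; constructor
    · rintro ⟨f, rfl⟩; exact ⟨f, f.2, rfl⟩
    · rintro ⟨g, hg, rfl⟩; exact ⟨⟨g, hg⟩, rfl⟩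
  have hle : Set.finrank ℝ (Set.range fun f : {x // x ∈ T} => xvec t h (f : E)) ≤
      Fintype.card {x // x ∈ T} := finrank_range_le_card _
  have hV : Nonempty V := by
    rw [← Fintype.card_pos_iff]
    have := hT.2; omega
  obtain ⟨v₀⟩ := hV
  have hgind : LinearIndependent ℝ (fun v : {v : V // v ≠ v₀} =>
      (⟨fun w => (if w = (v : V) then (1:ℝ) else 0) - if w = v₀ then 1 else 0,
        span_delta_sub hT v v₀⟩ : ↥(Submodule.span ℝ (xvec t h '' ↑T)))) := by
    rw [Fintype.linearIndependent_iff]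
    intro coef hcoef i
    have hval : ∑ v : {v : V // v ≠ v₀}, coef v •
        (fun w => (if w = (v : V) then (1:ℝ) else 0) - if w = v₀ then 1 else 0) = 0 := by
      have hcast := congrArg
        (fun x : ↥(Submodule.span ℝ (xvec t h '' ↑T)) => (x : V → ℝ)) hcoef
      simpa using hcast
    have happ := congrFun hval (i : V)
    rw [Finset.sum_apply] at happ
    have hterm : ∀ v : {v : V // v ≠ v₀},
        (coef v • (fun w => (if w = (v : V) then (1:ℝ) else 0) - if w = v₀ then 1 else 0)) (i : V)
        = if v = i then coef v else 0 := by
      intro v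
      rw [Pi.smul_apply, smul_eq_mul]
      rw [if_neg i.2]
      by_cases hvi : v = i
      · rw [if_pos hvi, if_pos (by rw [hvi])]
        ring
      · rw [if_neg hvi, if_neg (fun hh : (i : V) = (v : V) => hvi (Subtype.ext hh.symm))]
        ring
    rw [Finset.sum_congr rfl (fun v _ => hterm v),
      Finset.sum_ite_eq' Finset.univ i coef] at happ
    simpa using happ
  have hle2 : Fintype.card {v : V // v ≠ v₀} ≤
      Module.finrank ℝ ↥(Submodule.span ℝ (xvec t h '' ↑T)) :=
    hgind.fintype_card_le_finrank
  have hcards : Fintype.card {v : V // v ≠ v₀} = T.card := by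
    have h1 : Fintype.card {v : V // v ≠ v₀} = Fintype.card V - 1 := by
      rw [Fintype.card_subtype_compl, Fintype.card_subtype_eq]
    have := hT.2; omega
  rw [linearIndependent_iff_card_eq_finrank_span]
  have hcardT : Fintype.card {x // x ∈ T} = T.card := Fintype.card_coe T
  have hfr : Set.finrank ℝ (Set.range fun f : {x // x ∈ T} => xvec t h (f : E)) =
      Module.finrank ℝ ↥(Submodule.span ℝ (xvec t h '' ↑T)) := by
    rw [Set.finrank, hrange]
  omega

private lemma tree_circ_zero {T : Finset E} (hT : IsSpanningTree t h T) {ψ : E → ℝ}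
    (hψ : IsCirculation t h ψ) (hsupp : ∀ f, ψ f ≠ 0 → f ∈ T) : ψ = 0 := by
  classical
  have hind := tree_indep hT
  rw [Fintype.linearIndependent_iff] at hind
  have hsum : ∑ f : {x // x ∈ T}, ψ (f : E) • xvec t h (f : E) = 0 := by
    rw [Finset.sum_coe_sort T (fun f => ψ f • xvec t h f)]
    have h1 : ∑ f ∈ T, ψ f • xvec t h f = ∑ f, ψ f • xvec t h f :=
      Finset.sum_subset (Finset.subset_univ T) (fun f _ hf => by
        rw [show ψ f = 0 from by_contra fun hc => hf (hsupp f hc), zero_smul])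
    rw [h1]; exact hψ
  have hz := hind (fun f => ψ (f : E)) hsum
  funext f
  by_cases hf : f ∈ T
  · exact hz ⟨f, hf⟩
  · by_contra hc; exact hf (hsupp f hc)

private lemma fiber_pullback (T : Finset E) (c : (V → ℝ) → ℝ) :
    ∃ a : E → ℝ, (∀ g, a g ≠ 0 → g ∈ T) ∧
      (∀ g ∈ T, a g = c (xvec t h g) / ((T.filter fun g' => xvec t h g' = xvec t h g).card : ℝ)) ∧
      ∑ g ∈ T, a g • xvec t h g = ∑ y ∈ T.image (xvec t h), c y • y := by
  classical
  refine ⟨fun g => if g ∈ T then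
      c (xvec t h g) / ((T.filter fun g' => xvec t h g' = xvec t h g).card : ℝ) else 0,
    ?_, ?_, ?_⟩
  · intro g hg; by_contra hgT; simp [hgT] at hg
  · intro g hg; dsimp only; rw [if_pos hg]
  · rw [← Finset.sum_fiberwise_of_maps_to (t := T.image (xvec t h)) (g := xvec t h)
      (fun g hg => Finset.mem_image_of_mem _ hg)
      (fun g => (if g ∈ T then
        c (xvec t h g) / ((T.filter fun g' => xvec t h g' = xvec t h g).card : ℝ) else 0) • xvec t h g)]
    apply Finset.sum_congr rfl
    intro y hy
    obtain ⟨e, he, hey⟩ := Finset.mem_image.mp hy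
    have hfib : ∀ g ∈ T.filter fun g' => xvec t h g' = y,
        (if g ∈ T then
          c (xvec t h g) / ((T.filter fun g' => xvec t h g' = xvec t h g).card : ℝ) else 0) • xvec t h g
        = (c y / ((T.filter fun g' => xvec t h g' = y).card : ℝ)) • y := by
      intro g hg
      rw [Finset.mem_filter] at hg
      rw [if_pos hg.1, hg.2]
    rw [Finset.sum_congr rfl hfib, Finset.sum_const]
    have hcard : 0 < (T.filter fun g' => xvec t h g' = y).card :=
      Finset.card_pos.mpr ⟨e, Finset.mem_filter.mpr ⟨he, hey⟩⟩
    have hcast : ((T.filter fun g' => xvec t h g' = y).card : ℝ) ≠ 0 :=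
      ne_of_gt (by exact_mod_cast hcard)
    rw [← Nat.cast_smul_eq_nsmul ℝ, smul_smul]
    congr 1
    field_simp

private lemma exists_circ_through {T : Finset E} (hT : IsSpanningTree t h T) {f : E}
    (hf : f ∉ T) :
    ∃ φ : E → ℝ, IsCirculation t h φ ∧ φ f = 1 ∧ ∀ g, φ g ≠ 0 → g ∈ insert f T := by
  classical
  have hmem : xvec t h f ∈ Submodule.span ℝ ((T.image (xvec t h) : Finset (V → ℝ)) : Set (V → ℝ)) := by
    rw [Finset.coe_image]
    exact xvec_mem_span hT f
  rw [Submodule.mem_span_finset] at hmem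
  obtain ⟨c, -, hc⟩ := hmem
  obtain ⟨a, hasupp, _, haeq⟩ := fiber_pullback T c
  refine ⟨fun g => (if g = f then 1 else 0) - a g, ?_, ?_, ?_⟩
  · unfold IsCirculation
    have hsplit : ∑ g, ((if g = f then (1:ℝ) else 0) - a g) • xvec t h g
        = (∑ g, (if g = f then (1:ℝ) else 0) • xvec t h g) - ∑ g, a g • xvec t h g := by
      rw [← Finset.sum_sub_distrib]
      exact Finset.sum_congr rfl fun g _ => by rw [sub_smul]
    rw [hsplit]
    have h1 : ∑ g, (if g = f then (1:ℝ) else 0) • xvec t h g = xvec t h f := by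
      rw [Finset.sum_eq_single f (fun g _ hg => by rw [if_neg hg, zero_smul])
        (fun hf' => absurd (Finset.mem_univ f) hf')]
      rw [if_pos rfl, one_smul]
    have h2 : ∑ g, a g • xvec t h g = xvec t h f := by
      rw [← Finset.sum_subset (Finset.subset_univ T) (fun g _ hg => by
        rw [show a g = 0 from by_contra fun hc2 => hg (hasupp g hc2), zero_smul])]
      rw [haeq, hc]
    rw [h1, h2, sub_self]
  · dsimp only
    rw [if_pos rfl, show a f = 0 from by_contra fun hc2 => hf (hasupp f hc2)]
    ring
  · intro g hg
    by_cases hgf : g = f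
    · exact hgf ▸ Finset.mem_insert_self f T
    · refine Finset.mem_insert_of_mem (hasupp g ?_)
      intro ha0
      exact hg (by dsimp only; rw [if_neg hgf, ha0, sub_zero])

private lemma beyond {Q : Set (V → ℝ)} {p q : V → ℝ}
    (hp : p ∈ intrinsicInterior ℝ Q) (hq : q ∈ Q) :
    ∃ ε : ℝ, 0 < ε ∧ p + ε • (p - q) ∈ Q := by
  obtain ⟨y, hy, hyp⟩ := hp
  rw [mem_interior_iff_mem_nhds, nhds_subtype, Filter.mem_comap] at hy
  obtain ⟨W, hWn, hWsub⟩ := hy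
  have hg : Continuous (fun ε : ℝ => p + ε • (p - q)) := by fun_prop
  have h0 : p + (0:ℝ) • (p - q) = (y : V → ℝ) := by
    rw [hyp]; simp
  have hpre : (fun ε : ℝ => p + ε • (p - q)) ⁻¹' W ∈ nhds (0:ℝ) :=
    hg.continuousAt.preimage_mem_nhds
      (by show W ∈ nhds (p + (0:ℝ) • (p - q)); rw [h0]; exact hWn)
  obtain ⟨δ, hδ, hball⟩ := Metric.mem_nhds_iff.mp hpre
  refine ⟨δ/2, by linarith, ?_⟩
  have hzW : p + (δ/2) • (p - q) ∈ W := by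
    apply hball
    rw [Metric.mem_ball, Real.dist_eq, sub_zero, abs_of_pos (by linarith)]
    linarith
  have hpspan : p ∈ affineSpan ℝ Q := hyp ▸ y.2
  have hqspan : q ∈ affineSpan ℝ Q := subset_affineSpan ℝ Q hq
  have hzspan : p + (δ/2) • (p - q) ∈ affineSpan ℝ Q := by
    have hmem := AffineSubspace.smul_vsub_vadd_mem (affineSpan ℝ Q) (δ/2) hpspan hqspan hpspan
    have : (δ/2) • (p -ᵥ q) +ᵥ p = p + (δ/2) • (p - q) := by
      rw [vsub_eq_sub, vadd_eq_add]
      abel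
    rwa [this] at hmem
  exact hWsub (show (⟨_, hzspan⟩ : ↥(affineSpan ℝ Q)) ∈ Subtype.val ⁻¹' W from hzW)

private lemma relint_pos_comb {T : Finset E} {p : V → ℝ}
    (hp : p ∈ intrinsicInterior ℝ (rootPolyOn t h (↑T : Set E))) :
    ∃ a : E → ℝ, (∀ f, a f ≠ 0 → f ∈ T) ∧ (∀ f ∈ T, 0 < a f) ∧
      ∑ f ∈ T, a f • xvec t h f = p := by
  classical
  set S1 : Finset (V → ℝ) := insert 0 (T.image (xvec t h)) with hS1
  have hQ : rootPolyOn t h (↑T : Set E) = convexHull ℝ (↑S1 : Set (V → ℝ)) := by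
    rw [rootPolyOn, hS1]
    congr 1
    rw [Finset.coe_insert, Finset.coe_image, Set.insert_eq]
  rw [hQ] at hp
  have hS1ne : S1.Nonempty := ⟨0, Finset.mem_insert_self _ _⟩
  set q := S1.centroid ℝ id with hqdef
  have hq : q ∈ convexHull ℝ (↑S1 : Set (V → ℝ)) := Finset.centroid_mem_convexHull S1 hS1ne
  obtain ⟨ε, hε, hmem⟩ := beyond hp hq
  rw [Finset.convexHull_eq] at hmem
  obtain ⟨w', hw'0, hw'1, hw'eq⟩ := hmem
  rw [Finset.centerMass_eq_of_sum_1 _ _ hw'1] at hw'eq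
  simp only [id] at hw'eq
  set N : ℝ := (S1.card : ℝ) with hN
  have hNpos : 0 < N := by
    rw [hN]
    exact_mod_cast Finset.card_pos.mpr hS1ne
  have hq2 : q = ∑ y ∈ S1, (N⁻¹) • y := by
    rw [hqdef, Finset.centroid_eq_centerMass S1 hS1ne,
      Finset.centerMass_eq_of_sum_1 _ _ (Finset.sum_centroidWeights_eq_one_of_nonempty ℝ S1 hS1ne)]
    apply Finset.sum_congr rfl
    intro y _
    rw [Finset.centroidWeights_apply, id_eq, hN]
  set w : (V → ℝ) → ℝ := fun y => (w' y + ε / N) / (1 + ε) with hw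
  have hwpos : ∀ y ∈ S1, 0 < w y := by
    intro y hy
    have h1 := hw'0 y hy
    have h2 : 0 < ε / N := div_pos hε hNpos
    rw [hw]
    dsimp only
    apply div_pos
    · linarith
    · linarith
  have h1ε : (1:ℝ) + ε ≠ 0 := by linarith
  have hwsum : ∑ y ∈ S1, w y • y = p := by
    have hstep : ∑ y ∈ S1, w y • y
        = (1+ε)⁻¹ • ((∑ y ∈ S1, w' y • y) + (ε * N⁻¹) • ∑ y ∈ S1, y) := by
      rw [smul_add, Finset.smul_sum, Finset.smul_sum, Finset.smul_sum,
        ← Finset.sum_add_distrib]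
      apply Finset.sum_congr rfl
      intro y _
      rw [hw]
      dsimp only
      rw [smul_smul, smul_smul, ← add_smul]
      congr 1
      field_simp
    rw [hstep, hw'eq]
    have hq3 : (ε * N⁻¹) • ∑ y ∈ S1, y = ε • q := by
      rw [hq2, Finset.smul_sum, Finset.smul_sum]
      apply Finset.sum_congr rfl
      intro y _
      rw [smul_smul]
    rw [hq3]
    have : p + ε • (p - q) + ε • q = (1+ε) • p := by
      rw [smul_sub, add_smul, one_smul]
      abel
    rw [this, smul_smul, inv_mul_cancel₀ h1ε, one_smul]
  obtain ⟨a, hasupp, haval, haeq⟩ := fiber_pullback (t := t) (h := h) T w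
  have himg : ∑ y ∈ T.image (xvec t h), w y • y = p := by
    by_cases h0 : (0 : V → ℝ) ∈ T.image (xvec t h)
    · rw [← hwsum, hS1, Finset.insert_eq_self.mpr h0]
    · rw [← hwsum, hS1, Finset.sum_insert h0, smul_zero, zero_add]
  refine ⟨a, hasupp, ?_, by rw [haeq, himg]⟩
  intro f hf
  rw [haval f hf]
  apply div_pos
  · exact hwpos _ (by rw [hS1]; exact Finset.mem_insert_of_mem (Finset.mem_image_of_mem _ hf))
  · have : 0 < (T.filter fun g' => xvec t h g' = xvec t h f).card :=
      Finset.card_pos.mpr ⟨f, Finset.mem_filter.mpr ⟨hf, rfl⟩⟩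
    exact_mod_cast this

private lemma key_lemma {σ : Set (Finset E × Finset E)}
    (hσ : IsCircuitSignature t h σ) (hac : IsAcyclicSig σ) {T : Finset E}
    (hT : T ∈ treeSet t h σ) {Ap Am : Finset E} (hA : (Ap, Am) ∈ σ) :
    ¬ (Ap ⊆ T) := by
  classical
  intro hsub
  obtain ⟨hTtree, hTfund⟩ := hT
  have hAcyc := hσ.1 _ hA
  set N : Finset E := Am \ T with hN
  have hchoice : ∀ f : E, ∃ q : Finset E × Finset E, f ∈ N →
      q ∈ σ ∧ f ∈ q.1 ∧ q.1 ∪ q.2 ⊆ insert f T := by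
    intro f
    by_cases hfN : f ∈ N
    · have hfT : f ∉ T := (Finset.mem_sdiff.mp hfN).2
      obtain ⟨φ, hφ, hφf, hφsupp⟩ := exists_circ_through hTtree hfT
      have hφne : φ ≠ 0 := fun hc => by
        rw [hc] at hφf
        exact one_ne_zero hφf.symm
      obtain ⟨Dp, Dm, hD, hDp, hDm⟩ := exists_conformal_cycle hφ hφne
      have hDsub : Dp ∪ Dm ⊆ insert f T := by
        intro e he
        rcases Finset.mem_union.mp he with h1 | h1
        · exact hφsupp e (ne_of_gt (hDp e h1))
        · exact hφsupp e (ne_of_lt (hDm e h1))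
      have hfD : f ∈ Dp ∪ Dm := by
        by_contra hfD
        have hz : chiVec Dp Dm = 0 := by
          apply tree_circ_zero hTtree hD.2.2.1
          intro e hce
          have he2 : e ∈ Dp ∪ Dm := by
            by_contra hee
            rw [Finset.mem_union] at hee; push_neg at hee
            simp [chiVec, hee.1, hee.2] at hce
          rcases Finset.mem_insert.mp (hDsub he2) with h1 | h1
          · exact absurd (h1 ▸ he2) hfD
          · exact h1
        obtain ⟨e₀, he₀⟩ := hD.2.1
        have hne0 : chiVec Dp Dm e₀ ≠ 0 := by
          rcases Finset.mem_union.mp he₀ with h1 | h1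
          · have h2 : e₀ ∉ Dm := Finset.disjoint_left.mp hD.1 h1
            simp [chiVec, h1, h2]
          · have h2 : e₀ ∉ Dp := Finset.disjoint_right.mp hD.1 h1
            simp [chiVec, h1, h2]
        rw [hz] at hne0
        exact hne0 rfl
      by_cases hσD : (Dp, Dm) ∈ σ
      · exact ⟨(Dp, Dm), fun _ => ⟨hσD, hTfund f hfT Dp Dm hσD hDsub, hDsub⟩⟩
      · have hswap : (Dm, Dp) ∈ σ := (hσ.2 Dm Dp (swap_cycle hD)).mpr hσD
        have hDsub' : Dm ∪ Dp ⊆ insert f T := by rwa [Finset.union_comm]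
        exact ⟨(Dm, Dp), fun _ => ⟨hswap, hTfund f hfT Dm Dp hswap hDsub', hDsub'⟩⟩
    · exact ⟨(∅, ∅), fun hc => absurd hc hfN⟩
  choose F hF using hchoice
  set s : Finset (Finset E × Finset E) := insert (Ap, Am) (N.image F) with hs
  have hsub_σ : ↑s ⊆ σ := by
    intro x hx
    rw [Finset.mem_coe, hs, Finset.mem_insert] at hx
    rcases hx with rfl | hx
    · exact hA
    · obtain ⟨f, hfN, rfl⟩ := Finset.mem_image.mp hx
      exact (hF f hfN).1
  have hAnotin : (Ap, Am) ∉ N.image F := by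
    intro hc
    obtain ⟨f, hfN, hfe⟩ := Finset.mem_image.mp hc
    have h1 : f ∈ Ap := by
      have := (hF f hfN).2.1
      rwa [hfe] at this
    have h2 : f ∈ Am := (Finset.mem_sdiff.mp hfN).1
    exact Finset.disjoint_left.mp hAcyc.1 h1 h2
  have hFinj : ∀ f ∈ N, ∀ g ∈ N, F f = F g → f = g := by
    intro f hf g hg he
    have h1 : f ∈ (F g).1 ∪ (F g).2 := by
      rw [← he]
      exact Finset.mem_union_left _ (hF f hf).2.1
    rcases Finset.mem_insert.mp ((hF g hg).2.2 h1) with h3 | h3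
    · exact h3
    · exact absurd h3 (Finset.mem_sdiff.mp hf).2
  have hψcirc : IsCirculation t h (fun e => ∑ x ∈ s, chiVec x.1 x.2 e) := by
    unfold IsCirculation
    have hswap2 : ∑ e, (∑ x ∈ s, chiVec x.1 x.2 e) • xvec t h e
        = ∑ x ∈ s, ∑ e, chiVec x.1 x.2 e • xvec t h e := by
      rw [Finset.sum_comm]
      exact Finset.sum_congr rfl fun e _ => by rw [Finset.sum_smul]
    rw [hswap2]
    rw [Finset.sum_eq_zero]
    intro x hx
    exact (hσ.1 x (hsub_σ hx)).2.2.1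
  have hz : (fun e => ∑ x ∈ s, chiVec x.1 x.2 e) = 0 := by
    apply tree_circ_zero hTtree hψcirc
    intro e he
    by_contra heT
    apply he
    rw [hs, Finset.sum_insert hAnotin,
      Finset.sum_image (fun x hx y hy => hFinj x hx y hy)]
    have hterm : ∀ f ∈ N, chiVec (F f).1 (F f).2 e = if e = f then 1 else 0 := by
      intro f hfN
      by_cases hef : e = f
      · subst hef
        have hin : e ∈ (F e).1 := (hF e hfN).2.1
        have hnotin : e ∉ (F e).2 :=
          Finset.disjoint_left.mp (hσ.1 _ ((hF e hfN).1)).1 hin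
        simp [chiVec, hin, hnotin]
      · have hnot : e ∉ (F f).1 ∪ (F f).2 := by
          intro hc
          rcases Finset.mem_insert.mp ((hF f hfN).2.2 hc) with h1 | h1
          · exact hef h1
          · exact heT h1
        rw [Finset.mem_union] at hnot; push_neg at hnot
        simp [chiVec, hnot.1, hnot.2, hef]
    rw [Finset.sum_congr rfl hterm, Finset.sum_ite_eq (N) e (fun _ => (1:ℝ))]
    have heAp : e ∉ Ap := fun hc => heT (hsub hc)
    by_cases heAm : e ∈ Am
    · have heN : e ∈ N := Finset.mem_sdiff.mpr ⟨heAm, heT⟩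
      simp [chiVec, heAp, heAm, heN]
    · have heN : e ∉ N := fun hc => heAm (Finset.mem_sdiff.mp hc).1
      simp [chiVec, heAp, heAm, heN]
  have hhac := hac s (fun _ => 1) hsub_σ (fun _ => zero_le_one)
    ⟨(Ap, Am), Finset.mem_insert_self _ _, one_ne_zero⟩
  apply hhac
  have hone : ∑ x ∈ s, (1:ℝ) • chiVec x.1 x.2 = ∑ x ∈ s, chiVec x.1 x.2 :=
    Finset.sum_congr rfl fun x _ => one_smul _ _
  rw [hone]
  funext e
  rw [Finset.sum_apply]
  exact congrFun hz e

end proofs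

/-- for an acyclic circuit signature `σ`, any two distinct trees in
`tree(D,σ)` give simplices `Q̃_T` with disjoint (relative) interiors. -/
theorem stmt7 {V E : Type*} [Fintype V] [Fintype E] [DecidableEq V] [DecidableEq E]
    (t h : E → V) (σ : Set (Finset E × Finset E))
    (hσ : IsCircuitSignature t h σ) (hac : IsAcyclicSig σ)
    (T1 T2 : Finset E) (h1 : T1 ∈ treeSet t h σ) (h2 : T2 ∈ treeSet t h σ)
    (hne : T1 ≠ T2) :
    Disjoint (intrinsicInterior ℝ (rootPolyOn t h ↑T1))
      (intrinsicInterior ℝ (rootPolyOn t h ↑T2)) := by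
  classical
  rw [Set.disjoint_left]
  intro p hp1 hp2
  obtain ⟨a1, ha1s, ha1p, ha1e⟩ := relint_pos_comb hp1
  obtain ⟨a2, ha2s, ha2p, ha2e⟩ := relint_pos_comb hp2
  have extend : ∀ (a : E → ℝ) (T : Finset E), (∀ f, a f ≠ 0 → f ∈ T) →
      ∑ f ∈ T, a f • xvec t h f = ∑ f, a f • xvec t h f := fun a T hs =>
    Finset.sum_subset (Finset.subset_univ T) (fun f _ hf => by
      rw [show a f = 0 from by_contra fun hc => hf (hs f hc), zero_smul])
  have hψc : IsCirculation t h (fun f => a1 f - a2 f) := by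
    unfold IsCirculation
    have hsplit : ∑ f, (a1 f - a2 f) • xvec t h f
        = (∑ f, a1 f • xvec t h f) - ∑ f, a2 f • xvec t h f := by
      rw [← Finset.sum_sub_distrib]
      exact Finset.sum_congr rfl fun f _ => by rw [sub_smul]
    rw [hsplit, ← extend a1 T1 ha1s, ← extend a2 T2 ha2s, ha1e, ha2e, sub_self]
  have hT1card : T1.card = T2.card := by
    have e1 := h1.1.2; have e2 := h2.1.2; omega
  obtain ⟨f₁, hf₁⟩ : (T1 \ T2).Nonempty := by
    rw [Finset.sdiff_nonempty]
    intro hsub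
    exact hne (Finset.eq_of_subset_of_card_le hsub (le_of_eq hT1card.symm))
  have hf₁1 : f₁ ∈ T1 := (Finset.mem_sdiff.mp hf₁).1
  have hf₁2 : f₁ ∉ T2 := (Finset.mem_sdiff.mp hf₁).2
  have ha1nn : ∀ f, 0 ≤ a1 f := by
    intro f
    by_cases hf : f ∈ T1
    · exact le_of_lt (ha1p f hf)
    · rw [show a1 f = 0 from by_contra fun hc => hf (ha1s f hc)]
  have ha2nn : ∀ f, 0 ≤ a2 f := by
    intro f
    by_cases hf : f ∈ T2
    · exact le_of_lt (ha2p f hf)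
    · rw [show a2 f = 0 from by_contra fun hc => hf (ha2s f hc)]
  have hψne : (fun f => a1 f - a2 f) ≠ 0 := by
    intro hc
    have hzz : a1 f₁ - a2 f₁ = 0 := congrFun hc f₁
    have h2z : a2 f₁ = 0 := by
      by_contra hcc; exact hf₁2 (ha2s f₁ hcc)
    have h1p := ha1p f₁ hf₁1
    rw [h2z] at hzz
    linarith
  obtain ⟨Cp, Cm, hcyc, hCp, hCm⟩ := exists_conformal_cycle hψc hψne
  have hCp1 : Cp ⊆ T1 := by
    intro e he
    have h3 := hCp e he
    apply ha1s
    intro hc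
    have := ha2nn e
    simp only [hc] at h3
    linarith
  have hCm2 : Cm ⊆ T2 := by
    intro e he
    have h3 := hCm e he
    apply ha2s
    intro hc
    have := ha1nn e
    simp only [hc] at h3
    linarith
  by_cases hor : (Cp, Cm) ∈ σ
  · exact key_lemma hσ hac h1 hor hCp1
  · have hswap : (Cm, Cp) ∈ σ := (hσ.2 Cm Cp (swap_cycle hcyc)).mpr hor
    exact key_lemma hσ hac h2 hswap hCm2
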